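/- Let n₁, n₂, m₁, m₂ be positive integers with n₁ ≤ 2·n₂. Then H₂(n₁, m₁) + n₁ + n₂ ≤ G₂(n₁ + n₂, m₁ + m₂), where G₂(n, m) = n·(d₂ − 1 + c₂·log₂ m), H₂(n, m) = n·(d₂ + c₂·log₂(m − 1)) for m ≥ 2 and H₂(n, 1) = 0, with c₂ = 3/log₂(27/4) and d₂ = 6 − c₂·(3·log₂ 3 − 1). -/
import Mathlib


open Real

/-- The constant `c₂ = 3 / log₂(27/4)`. -/
noncomputable def c2 : ℝ := 3 / logb 2 (27 / 4)

/-- The constant `d₂ = 6 − c₂·(3·log₂ 3 − 1)`. -/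
noncomputable def d2 : ℝ := 6 - c2 * (3 * logb 2 3 - 1)

/-- `G₂(n, m) = n·(d₂ − 1 + c₂·log₂ m)`. -/
noncomputable def G2 (n m : ℕ) : ℝ := (n : ℝ) * (d2 - 1 + c2 * logb 2 m)

/-- `H₂(n, m) = n·(d₂ + c₂·log₂(m−1))` for `m ≥ 2`, and `H₂(n, 1) = 0`. -/
noncomputable def H2 (n m : ℕ) : ℝ :=
  if m = 1 then 0 else (n : ℝ) * (d2 + c2 * logb 2 ((m : ℝ) - 1))

lemma logb274 : logb 2 (27 / 4) = 3 * logb 2 3 - 2 := by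
  have h : (27 : ℝ) / 4 = 3 ^ 3 / 2 ^ 2 := by norm_num
  rw [h, Real.logb_div (by norm_num) (by norm_num), Real.logb_pow, Real.logb_pow,
    Real.logb_self_eq_one (by norm_num : (1:ℝ) < 2)]
  ring

lemma l3_ge : (1 : ℝ) ≤ logb 2 3 := by
  have := Real.logb_self_eq_one (b := 2) (by norm_num)
  calc (1:ℝ) = logb 2 2 := this.symm
    _ ≤ logb 2 3 := Real.logb_le_logb_of_le (by norm_num) (by norm_num) (by norm_num)

lemma c2_eq : c2 = 3 / (3 * logb 2 3 - 2) := by rw [c2, logb274]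

lemma c2_pos : 0 < c2 := by
  rw [c2_eq]
  have := l3_ge
  apply div_pos (by norm_num)
  linarith

lemma c2_key : c2 * (3 * logb 2 3 - 2) = 3 := by
  have := l3_ge
  rw [c2_eq, div_mul_cancel₀]
  linarith

set_option maxHeartbeats 1000000 in
/-- Lemma 11(b): if `n₁ ≤ 2·n₂` then
`H₂(n₁,m₁) + n₁ + n₂ ≤ G₂(n₁+n₂, m₁+m₂)`. -/
theorem GH2_bound_b (n₁ n₂ m₁ m₂ : ℕ)
    (hn₁ : 0 < n₁) (hn₂ : 0 < n₂) (hm₁ : 0 < m₁) (hm₂ : 0 < m₂)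
    (h : n₁ ≤ 2 * n₂) :
    H2 n₁ m₁ + n₁ + n₂ ≤ G2 (n₁ + n₂) (m₁ + m₂) := by
  have hl := l3_ge
  have hc := c2_pos
  have hc3 := c2_key
  have hd : d2 = 6 - c2 * (3 * logb 2 3 - 1) := rfl
  set l := logb 2 3 with hldef
  have hn₁' : (1:ℝ) ≤ n₁ := by exact_mod_cast hn₁
  have hn₂' : (1:ℝ) ≤ n₂ := by exact_mod_cast hn₂
  have h' : (n₁ : ℝ) ≤ 2 * n₂ := by exact_mod_cast h
  unfold G2 H2
  by_cases hm : m₁ = 1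
  · simp only [hm, if_pos rfl]
    have hm2 : (2:ℝ) ≤ ((1 + m₂ : ℕ) : ℝ) := by
      have : (1:ℝ) ≤ m₂ := by exact_mod_cast hm₂
      push_cast; linarith
    have hL : (1:ℝ) ≤ logb 2 ((1 + m₂ : ℕ) : ℝ) := by
      calc (1:ℝ) = logb 2 2 := (Real.logb_self_eq_one (by norm_num : (1:ℝ) < 2)).symm
        _ ≤ _ := Real.logb_le_logb_of_le (by norm_num) (by norm_num) hm2
    have hcoef : (2:ℝ) ≤ d2 - 1 + c2 * logb 2 ((1 + m₂ : ℕ) : ℝ) := by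
      have : c2 * 1 ≤ c2 * logb 2 ((1 + m₂ : ℕ) : ℝ) :=
        mul_le_mul_of_nonneg_left hL hc.le
      rw [hd]; nlinarith [hc3]
    have hpos : (0:ℝ) < (n₁ : ℝ) + n₂ := by linarith
    calc (0:ℝ) + n₁ + n₂ = ((n₁:ℝ) + n₂) * 1 := by ring
      _ ≤ ((n₁:ℝ) + n₂) * (d2 - 1 + c2 * logb 2 ((1 + m₂ : ℕ) : ℝ)) := by
          apply mul_le_mul_of_nonneg_left _ hpos.le; linarith
      _ = _ := by push_cast; ring
  · rw [if_neg hm]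
    have hm₁2 : 2 ≤ m₁ := by omega
    have hm₁2' : (2:ℝ) ≤ (m₁ : ℝ) := by exact_mod_cast hm₁2
    have hm₂' : (1:ℝ) ≤ (m₂ : ℝ) := by exact_mod_cast hm₂
    have hm1pos : (0:ℝ) < (m₁ : ℝ) - 1 := by linarith
    set L := logb 2 ((m₁ + m₂ : ℕ) : ℝ) with hLdef
    set ℓ := logb 2 ((m₁ : ℝ) - 1) with hℓdef
    have hsum3 : (3:ℝ) ≤ ((m₁ + m₂ : ℕ) : ℝ) := by push_cast; linarith
    have hL3 : l ≤ L := Real.logb_le_logb_of_le (by norm_num) (by norm_num) hsum3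
    have hℓ0 : 0 ≤ ℓ := Real.logb_nonneg (by norm_num) (by linarith)
    have hpoly : (27/2 : ℝ) * ((m₁:ℝ) - 1)^2 ≤ (((m₁ + m₂ : ℕ)):ℝ)^3 := by
      push_cast
      nlinarith [sq_nonneg ((m₁:ℝ) - 5),
        mul_nonneg (sq_nonneg ((m₁:ℝ)+1)) (sub_nonneg.2 hm₂'),
        mul_nonneg (mul_nonneg (sub_nonneg.2 hm₂') (by linarith : (0:ℝ) ≤ (m₁:ℝ)+(m₂:ℝ))) (by linarith : (0:ℝ) ≤ (m₁:ℝ)+1)]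
    have hkey : 3 * l - 1 ≤ 3 * L - 2 * ℓ := by
      have h1 : logb 2 ((27/2 : ℝ) * ((m₁:ℝ) - 1)^2) ≤ logb 2 ((((m₁ + m₂ : ℕ)):ℝ)^3) :=
        Real.logb_le_logb_of_le (by norm_num)
          (mul_pos (by norm_num) (pow_pos hm1pos 2)) hpoly
      have h2 : logb 2 ((27/2 : ℝ) * ((m₁:ℝ) - 1)^2) = (3 * l - 1) + 2 * ℓ := by
        rw [Real.logb_mul (by norm_num) (ne_of_gt (pow_pos hm1pos 2)), Real.logb_pow]
        have h27 : (27/2 : ℝ) = 3^3 / 2 := by norm_num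
        rw [h27, Real.logb_div (by norm_num) (by norm_num), Real.logb_pow,
          Real.logb_self_eq_one (by norm_num : (1:ℝ) < 2)]
        push_cast; ring
      have h3 : logb 2 ((((m₁ + m₂ : ℕ)):ℝ)^3) = 3 * L := by
        rw [Real.logb_pow]; congr 1
      rw [h2, h3] at h1; linarith
    have hgoal : 0 ≤ (n₂:ℝ) * (d2 - 2 + c2 * L) + (n₁:ℝ) * (c2 * (L - ℓ) - 2) := by
      have hA : 0 ≤ d2 - 2 + c2 * L := by
        have h1 : c2 * l ≤ c2 * L := mul_le_mul_of_nonneg_left hL3 hc.le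
        have h2 : 0 ≤ c2 * (l - 1) := mul_nonneg hc.le (by linarith)
        rw [hd]; nlinarith [hc3]
      by_cases hs : 0 ≤ c2 * (L - ℓ) - 2
      · have t1 := mul_nonneg (by linarith : (0:ℝ) ≤ (n₁:ℝ)) hs
        have t2 := mul_nonneg (by linarith : (0:ℝ) ≤ (n₂:ℝ)) hA
        linarith
      · push_neg at hs
        have hstep : (2 * (n₂:ℝ)) * (c2 * (L - ℓ) - 2) ≤ (n₁:ℝ) * (c2 * (L - ℓ) - 2) :=
          mul_le_mul_of_nonpos_right h' hs.le
        have hB : 0 ≤ d2 - 2 + c2 * L + 2 * (c2 * (L - ℓ) - 2) := by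
          have h1 : c2 * (3 * l - 1) ≤ c2 * (3 * L - 2 * ℓ) :=
            mul_le_mul_of_nonneg_left hkey hc.le
          rw [hd]; nlinarith
        nlinarith [mul_nonneg (by linarith : (0:ℝ) ≤ (n₂:ℝ)) hB]
    clear_value l L ℓ
    rw [Nat.cast_add n₁ n₂]
    nlinarith [hgoal]
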